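/- Let n ≥ 3 and let Lₙ be the n×n Laplacian minor of the leafed n-cycle. For every natural number m, the number of integer vectors λ = (λ₀, …, λ_{n−1}) ∈ ℤⁿ satisfying Lₙ·λ ≥ 0 componentwise and λ₀ = m equals the number of vectors d = (d₀, …, d_{n−1}) ∈ ℕⁿ with d₀ + d₁ + ⋯ + d_{n−1} = m such that n divides Σ_{j=1}^{n−1} (n−j)·dⱼ. (Equivalently, the generating function σ(q) = Σ_λ q^{λ₀}, summed over integer points of the cone Lₙ·λ ≥ 0, equals (Σ_{c ∈ Sₙ} q^{φ(c)})/(1−qⁿ)ⁿ, where Sₙ is the set of c ∈ {0,…,n−1}ⁿ with Σ_{j=1}^{n−1}(n−j)cⱼ ≡ 0 (mod n) and φ(c) = Σⱼ cⱼ.) -/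

import Mathlib

/-- The Laplacian minor (at the leaf) of the leafed `n`-cycle, over `ℤ`:
`(Lₙ)₀₀ = 3`, diagonal `2` elsewhere, `−1` between cyclically adjacent vertices. -/
def leafedCycleLaplacianMinor (n : ℕ) : Matrix (Fin n) (Fin n) ℤ :=
  Matrix.of fun i j =>
    if i = j then (if i.val = 0 then 3 else 2)
    else if i.val + 1 = j.val ∨ j.val + 1 = i.val ∨
        (i.val = 0 ∧ j.val = n - 1) ∨ (j.val = 0 ∧ i.val = n - 1) then -1
    else 0

namespace LeafedAux

variable {n : ℕ}

lemma mulVec_def (M : Matrix (Fin n) (Fin n) ℤ) (v : Fin n → ℤ) (i : Fin n) :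
    M.mulVec v i = ∑ j, M i j * v j := rfl

lemma three_point (a b c : Fin n)
    (f : Fin n → ℤ) (x y z : ℤ)
    (h : ∀ j, f j = (if j = a then x else 0) + (if j = b then y else 0) +
      (if j = c then z else 0)) :
    ∑ j, f j = x + y + z := by
  rw [Finset.sum_congr rfl (fun j _ => h j)]
  simp [Finset.sum_add_distrib, Finset.sum_ite_eq']

lemma row0 (hn : 2 < n) (lam : Fin n → ℤ) :
    (leafedCycleLaplacianMinor n).mulVec lam ⟨0, by omega⟩ =
      3 * lam ⟨0, by omega⟩ - lam ⟨1, by omega⟩ - lam ⟨n-1, by omega⟩ := by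
  have := three_point (n := n) ⟨0, by omega⟩ ⟨1, by omega⟩ ⟨n-1, by omega⟩
    (fun j => leafedCycleLaplacianMinor n ⟨0, by omega⟩ j * lam j)
    (3 * lam ⟨0, by omega⟩) (-lam ⟨1, by omega⟩) (-lam ⟨n-1, by omega⟩)
    (by
      rintro ⟨jv, hj⟩
      simp only [leafedCycleLaplacianMinor, Matrix.of_apply, Fin.mk.injEq, true_and,
        and_true, false_or, or_false, false_and, and_false, or_true, true_or]
      split_ifs <;>
        first
          | (exfalso; ((try simp only [false_or, or_false] at *); omega))
          | (subst_vars; ring1))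
  rw [mulVec_def, this]; ring

lemma rowmid (hn : 2 < n) (lam : Fin n → ℤ) (i : ℕ) (h1 : 0 < i) (h2 : i < n - 1) :
    (leafedCycleLaplacianMinor n).mulVec lam ⟨i, by omega⟩ =
      2 * lam ⟨i, by omega⟩ - lam ⟨i-1, by omega⟩ - lam ⟨i+1, by omega⟩ := by
  have := three_point (n := n) ⟨i, by omega⟩ ⟨i-1, by omega⟩ ⟨i+1, by omega⟩
    (fun j => leafedCycleLaplacianMinor n ⟨i, by omega⟩ j * lam j)
    (2 * lam ⟨i, by omega⟩) (-lam ⟨i-1, by omega⟩) (-lam ⟨i+1, by omega⟩)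
    (by
      rintro ⟨jv, hj⟩
      simp only [leafedCycleLaplacianMinor, Matrix.of_apply, Fin.mk.injEq, true_and,
        and_true, false_or, or_false, false_and, and_false, or_true, true_or]
      split_ifs <;>
        first
          | (exfalso; ((try simp only [false_or, or_false] at *); omega))
          | (subst_vars; ring1))
  rw [mulVec_def, this]; ring

lemma rowlast (hn : 2 < n) (lam : Fin n → ℤ) :
    (leafedCycleLaplacianMinor n).mulVec lam ⟨n-1, by omega⟩ =
      2 * lam ⟨n-1, by omega⟩ - lam ⟨n-2, by omega⟩ - lam ⟨0, by omega⟩ := by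
  have := three_point (n := n) ⟨n-1, by omega⟩ ⟨n-2, by omega⟩ ⟨0, by omega⟩
    (fun j => leafedCycleLaplacianMinor n ⟨n-1, by omega⟩ j * lam j)
    (2 * lam ⟨n-1, by omega⟩) (-lam ⟨n-2, by omega⟩) (-lam ⟨0, by omega⟩)
    (by
      rintro ⟨jv, hj⟩
      simp only [leafedCycleLaplacianMinor, Matrix.of_apply, Fin.mk.injEq, true_and,
        and_true, false_or, or_false, false_and, and_false, or_true, true_or]
      split_ifs <;>
        first
          | (exfalso; ((try simp only [false_or, or_false] at *); omega))
          | (subst_vars; ring1))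
  rw [mulVec_def, this]; ring

lemma L_symm (i j : Fin n) :
    leafedCycleLaplacianMinor n i j = leafedCycleLaplacianMinor n j i := by
  rcases eq_or_ne i j with rfl | hne
  · rfl
  · obtain ⟨iv, hi⟩ := i; obtain ⟨jv, hj⟩ := j
    have hne' : iv ≠ jv := by simpa [Fin.ext_iff] using hne
    simp only [leafedCycleLaplacianMinor, Matrix.of_apply, Fin.mk.injEq]
    split_ifs <;> first | rfl | (exfalso; omega)

lemma swap (c lam : Fin n → ℤ) :
    ∑ i, c i * (leafedCycleLaplacianMinor n).mulVec lam i =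
      ∑ k, (leafedCycleLaplacianMinor n).mulVec c k * lam k := by
  simp only [mulVec_def, Finset.mul_sum, Finset.sum_mul]
  rw [Finset.sum_comm]
  refine Finset.sum_congr rfl fun k _ => Finset.sum_congr rfl fun i _ => ?_
  rw [L_symm]; ring

lemma mulVec_one (hn : 2 < n) (k : Fin n) :
    (leafedCycleLaplacianMinor n).mulVec (fun _ => 1) k =
      if k.val = 0 then 1 else 0 := by
  obtain ⟨kv, hk⟩ := k
  rcases show kv = 0 ∨ kv = n - 1 ∨ (0 < kv ∧ kv < n - 1) by omega with rfl | rfl | ⟨h1, h2⟩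
  · rw [row0 hn]; norm_num
  · rw [rowlast hn]; have : ¬ (n - 1 = 0) := by omega
    simp [this]
  · rw [rowmid hn _ kv h1 h2]
    have : ¬ (kv = 0) := by omega
    simp [this]

lemma mulVec_w (hn : 2 < n) (k : Fin n) :
    (leafedCycleLaplacianMinor n).mulVec (fun j => (n:ℤ) - j.val) k =
      if k.val = 0 then 2*(n:ℤ) else if k.val = n-1 then -(n:ℤ) else 0 := by
  obtain ⟨kv, hk⟩ := k
  rcases show kv = 0 ∨ kv = n - 1 ∨ (0 < kv ∧ kv < n - 1) by omega with rfl | rfl | ⟨h1, h2⟩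
  · rw [row0 hn]
    have h1 : ((n-1 : ℕ) : ℤ) = (n:ℤ) - 1 := by
      have : 1 ≤ n := by omega
      push_cast [this]; ring
    simp [h1]; try ring
  · rw [rowlast hn]
    have e1 : ((n-1 : ℕ) : ℤ) = (n:ℤ) - 1 := by
      have : 1 ≤ n := by omega
      push_cast [this]; ring
    have e2 : ((n-2 : ℕ) : ℤ) = (n:ℤ) - 2 := by
      have : 2 ≤ n := by omega
      push_cast [this]; ring
    have h3 : ¬ (n - 1 = 0) := by omega
    simp [e1, e2, h3]; try ring
  · rw [rowmid hn _ kv h1 h2]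
    have e1 : ((kv-1 : ℕ) : ℤ) = (kv:ℤ) - 1 := by
      push_cast [h1]; ring
    have h3 : ¬ (kv = 0) := by omega
    have h4 : ¬ (kv = n - 1) := by omega
    push_cast [e1]
    simp [h3, h4]; try ring

lemma sum_rows (hn : 2 < n) (lam : Fin n → ℤ) :
    ∑ i, (leafedCycleLaplacianMinor n).mulVec lam i = lam ⟨0, by omega⟩ := by
  have h := swap (n := n) (fun _ => 1) lam
  simp only [one_mul] at h
  rw [h]
  have key : ∀ k : Fin n, (leafedCycleLaplacianMinor n).mulVec (fun _ => 1) k * lam k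
      = (if k = (⟨0, by omega⟩ : Fin n) then lam k else 0) := by
    intro k
    rw [mulVec_one hn k]
    by_cases hk : k.val = 0
    · rw [if_pos hk, if_pos (show k = (⟨0, by omega⟩ : Fin n) by simp [Fin.ext_iff, hk])]
      ring
    · rw [if_neg hk, if_neg (show ¬ k = (⟨0, by omega⟩ : Fin n) by simp [Fin.ext_iff]; omega)]
      ring
  rw [Finset.sum_congr rfl (fun k _ => key k), Finset.sum_ite_eq']
  simp

lemma weighted (hn : 2 < n) (lam : Fin n → ℤ) :
    ∑ i : Fin n, ((n:ℤ) - i.val) * (leafedCycleLaplacianMinor n).mulVec lam i =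
      2*(n:ℤ) * lam ⟨0, by omega⟩ - (n:ℤ) * lam ⟨n-1, by omega⟩ := by
  have h := swap (n := n) (fun j => (n:ℤ) - j.val) lam
  rw [h]
  have key : ∀ k : Fin n, (leafedCycleLaplacianMinor n).mulVec (fun j => (n:ℤ) - j.val) k * lam k
      = (if k = (⟨0, by omega⟩ : Fin n) then 2*(n:ℤ) * lam k else 0)
        + (if k = (⟨n-1, by omega⟩ : Fin n) then -(n:ℤ) * lam k else 0) := by
    intro k
    rw [mulVec_w hn k]
    rcases show k.val = 0 ∨ k.val = n-1 ∨ (¬k.val = 0 ∧ ¬k.val = n-1) by omega with h | h | ⟨h, h'⟩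
    · rw [if_pos h, if_pos (show k = (⟨0, by omega⟩ : Fin n) by simp [Fin.ext_iff, h]),
        if_neg (show ¬ k = (⟨n-1, by omega⟩ : Fin n) by simp [Fin.ext_iff]; omega)]
      ring
    · rw [if_neg (show ¬ k.val = 0 by omega), if_pos h,
        if_pos (show k = (⟨n-1, by omega⟩ : Fin n) by simp [Fin.ext_iff, h]),
        if_neg (show ¬ k = (⟨0, by omega⟩ : Fin n) by simp [Fin.ext_iff]; omega)]
      ring
    · rw [if_neg h, if_neg h',
        if_neg (show ¬ k = (⟨0, by omega⟩ : Fin n) by simp [Fin.ext_iff]; omega),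
        if_neg (show ¬ k = (⟨n-1, by omega⟩ : Fin n) by simp [Fin.ext_iff]; omega)]
      ring
  rw [Finset.sum_congr rfl (fun k _ => key k), Finset.sum_add_distrib,
    Finset.sum_ite_eq', Finset.sum_ite_eq']
  simp; ring

set_option maxHeartbeats 1000000 in
lemma inj_lemma (hn : 2 < n) (lam lam' : Fin n → ℤ)
    (h : ∀ i, (leafedCycleLaplacianMinor n).mulVec lam i =
      (leafedCycleLaplacianMinor n).mulVec lam' i)
    (h0 : lam ⟨0, by omega⟩ = lam' ⟨0, by omega⟩) : lam = lam' := by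
  set mu : Fin n → ℤ := lam - lam' with hmu
  have hrow : ∀ i, (leafedCycleLaplacianMinor n).mulVec mu i = 0 := by
    intro i
    rw [hmu, Matrix.mulVec_sub]
    simp [h i]
  have hmu0 : mu ⟨0, by omega⟩ = 0 := by simp [hmu, h0]
  set t : ℤ := mu ⟨1, by omega⟩ with ht
  have claim : ∀ k, ∀ hk : k < n, mu ⟨k, hk⟩ = (k : ℤ) * t := by
    intro k
    induction k using Nat.strong_induction_on with
    | _ k ih =>
      intro hk
      rcases show k = 0 ∨ k = 1 ∨ 2 ≤ k by omega with rfl | rfl | h2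
      · simpa using hmu0
      · rw [ht]
        simp
      · obtain ⟨j, rfl⟩ : ∃ j, k = j + 2 := ⟨k - 2, by omega⟩
        have e := hrow ⟨j+1, by omega⟩
        rw [rowmid hn mu (j+1) (by omega) (by omega)] at e
        simp only [Nat.add_sub_cancel] at e
        have i1 := ih (j+1) (by omega) (by omega)
        have i0 := ih j (by omega) (by omega)
        have hidx : (⟨j+1+1, by omega⟩ : Fin n) = (⟨j+2, hk⟩ : Fin n) := by
          simp [Fin.ext_iff]
        simp only [hidx, i1, i0] at e
        push_cast at e ⊢
        linarith
  have elast := hrow ⟨n-1, by omega⟩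
  rw [rowlast hn mu] at elast
  have c1 := claim (n-1) (by omega)
  have c2 := claim (n-2) (by omega)
  have hcast1 : ((n-1:ℕ):ℤ) = (n:ℤ) - 1 := by
    push_cast [show 1 ≤ n by omega]; ring
  have hcast2 : ((n-2:ℕ):ℤ) = (n:ℤ) - 2 := by
    push_cast [show 2 ≤ n by omega]; ring
  simp only [c1, c2, hmu0, hcast1, hcast2] at elast
  have hnt : (n:ℤ) * t = 0 := by linarith
  have htz : t = 0 := by
    rcases mul_eq_zero.mp hnt with h' | h'
    · exfalso
      have : (n:ℤ) ≠ 0 := by exact_mod_cast (show n ≠ 0 by omega)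
      exact this h'
    · exact h'
  funext i
  have hcl := claim i.val i.isLt
  rw [htz, mul_zero] at hcl
  have hmui : mu i = 0 := by
    have : (⟨i.val, i.isLt⟩ : Fin n) = i := Fin.eta i i.isLt
    rwa [this] at hcl
  have : lam i - lam' i = 0 := by simpa [hmu] using hmui
  linarith

def Df (n : ℕ) (d : Fin n → ℕ) : ℕ → ℤ := fun j => if h : j < n then (d ⟨j, h⟩ : ℤ) else 0

def Ff (n : ℕ) (d : Fin n → ℕ) : ℕ → ℤ :=
  fun i => ∑ j ∈ Finset.Ico 1 i, ((i:ℤ) - (j:ℤ)) * Df n d j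

def Sv (n : ℕ) (d : Fin n → ℕ) : ℤ := ∑ j ∈ Finset.Ico 1 n, ((n:ℤ) - (j:ℤ)) * Df n d j

def gf (n m : ℕ) (d : Fin n → ℕ) : Fin n → ℤ :=
  fun i => (m:ℤ) + (i.val:ℤ) * (Sv n d / n) - Ff n d i.val

lemma Df_nonneg (d : Fin n → ℕ) (j : ℕ) : 0 ≤ Df n d j := by
  unfold Df; split <;> simp

lemma Ff_zero (d : Fin n → ℕ) : Ff n d 0 = 0 := by
  simp [Ff, Finset.Ico_eq_empty (by omega : ¬ (1:ℕ) < 0)]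

lemma Ff_one (d : Fin n → ℕ) : Ff n d 1 = 0 := by
  simp [Ff]

lemma Ff_n (d : Fin n → ℕ) : Ff n d n = Sv n d := rfl

lemma dFf (d : Fin n → ℕ) (i : ℕ) :
    Ff n d (i+1) = Ff n d i + ∑ j ∈ Finset.Ico 1 (i+1), Df n d j := by
  rcases Nat.eq_zero_or_pos i with rfl | hi
  · simp [Ff, Finset.Ico_eq_empty (by omega : ¬ (1:ℕ) < 0)]
  · unfold Ff
    rw [Finset.sum_congr rfl (fun j (_ : j ∈ Finset.Ico 1 (i+1)) => show
        (((i+1:ℕ):ℤ) - (j:ℤ)) * Df n d j = ((i:ℤ) - (j:ℤ)) * Df n d j + Df n d j from by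
      push_cast; ring)]
    rw [Finset.sum_add_distrib, Finset.sum_Ico_succ_top hi]
    simp

lemma gRow (hn : 2 < n) (m : ℕ) (d : Fin n → ℕ)
    (hdvd : (n:ℤ) ∣ Sv n d)
    (hm : (m:ℤ) = Df n d 0 + ∑ j ∈ Finset.Ico 1 n, Df n d j) :
    ∀ i : Fin n, (leafedCycleLaplacianMinor n).mulVec (gf n m d) i = Df n d i.val := by
  have hq : (n:ℤ) * (Sv n d / n) = Sv n d := Int.mul_ediv_cancel' hdvd
  have hcast1 : ((n-1:ℕ):ℤ) = (n:ℤ) - 1 := by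
    push_cast [show 1 ≤ n by omega]; ring
  have hcast2 : ((n-2:ℕ):ℤ) = (n:ℤ) - 2 := by
    push_cast [show 2 ≤ n by omega]; ring
  rintro ⟨iv, hi⟩
  rcases show iv = 0 ∨ iv = n-1 ∨ (0 < iv ∧ iv < n-1) by omega with rfl | rfl | ⟨h1, h2⟩
  · rw [row0 hn]
    have hd : Sv n d = Ff n d (n-1) + ∑ j ∈ Finset.Ico 1 n, Df n d j := by
      have h := dFf d (n-1)
      rw [show n-1+1 = n by omega] at h
      rw [← Ff_n d, h]
    simp only [gf, Ff_zero, Ff_one, hcast1]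
    push_cast
    linarith
  · rw [rowlast hn]
    have hd1 : Sv n d = Ff n d (n-1) + ∑ j ∈ Finset.Ico 1 n, Df n d j := by
      have h := dFf d (n-1)
      rw [show n-1+1 = n by omega] at h
      rw [← Ff_n d, h]
    have hd2 : Ff n d (n-1) = Ff n d (n-2) + ∑ j ∈ Finset.Ico 1 (n-1), Df n d j := by
      have h := dFf d (n-2)
      rw [show n-2+1 = n-1 by omega] at h
      exact h
    have hT : ∑ j ∈ Finset.Ico 1 n, Df n d j
        = (∑ j ∈ Finset.Ico 1 (n-1), Df n d j) + Df n d (n-1) := by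
      have h := Finset.sum_Ico_succ_top (show 1 ≤ n-1 by omega) (Df n d)
      rw [show n-1+1 = n by omega] at h
      exact h
    simp only [gf, Ff_zero, hcast1, hcast2]
    push_cast
    linarith
  · obtain ⟨k, rfl⟩ : ∃ k, iv = k + 1 := ⟨iv - 1, by omega⟩
    rw [rowmid hn _ (k+1) h1 h2]
    simp only [gf, Nat.add_sub_cancel]
    have hd1 := dFf d k
    have hd2 := dFf d (k+1)
    have hT : ∑ j ∈ Finset.Ico 1 (k+1+1), Df n d j
        = (∑ j ∈ Finset.Ico 1 (k+1), Df n d j) + Df n d (k+1) :=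
      Finset.sum_Ico_succ_top (by omega) (Df n d)
    push_cast
    linarith

lemma convS (hn : 2 < n) (d : Fin n → ℕ) :
    ((∑ j ∈ Finset.univ.filter (fun j : Fin n => 0 < j.val), (n - j.val) * d j : ℕ) : ℤ)
      = Sv n d := by
  rw [Finset.sum_filter]
  push_cast
  rw [Finset.sum_congr rfl (fun j (_ : j ∈ Finset.univ) => show
      (if 0 < j.val then ((n - j.val : ℕ) : ℤ) * (d j : ℤ) else 0)
        = (fun jv => if 0 < jv then ((n - jv : ℕ) : ℤ) * Df n d jv else 0) j.val from by
    simp only [Df, j.isLt, dif_pos, Fin.eta])]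
  have e1 : (∑ j : Fin n,
        (fun jv => if 0 < jv then ((n - jv : ℕ) : ℤ) * Df n d jv else 0) j.val)
      = ∑ jv ∈ Finset.range n,
        (fun jv => if 0 < jv then ((n - jv : ℕ) : ℤ) * Df n d jv else 0) jv :=
    Fin.sum_univ_eq_sum_range (fun jv => if 0 < jv then ((n - jv : ℕ) : ℤ) * Df n d jv else 0) n
  simp only at e1
  rw [e1]
  rw [Finset.range_eq_Ico, ← Finset.sum_filter]
  have hfil : Finset.filter (fun jv => 0 < jv) (Finset.Ico 0 n) = Finset.Ico 1 n := by
    ext a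
    simp only [Finset.mem_filter, Finset.mem_Ico]
    omega
  rw [hfil]
  unfold Sv
  refine Finset.sum_congr rfl fun j hj => ?_
  have hj' : j < n := (Finset.mem_Ico.mp hj).2
  rw [Nat.cast_sub (le_of_lt hj')]

lemma convM (d : Fin n → ℕ) :
    ((∑ j, d j : ℕ) : ℤ) = ∑ j ∈ Finset.range n, Df n d j := by
  push_cast
  rw [Finset.sum_congr rfl (fun j (_ : j ∈ Finset.univ) => show
      ((d j : ℤ)) = (fun jv => Df n d jv) j.val from by
    simp only [Df, j.isLt, dif_pos, Fin.eta])]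
  exact Fin.sum_univ_eq_sum_range _ n

end LeafedAux

/-- The number of integer points `λ` of the leafed `n`-cycle cone with
`λ₀ = m` equals the number of `d ∈ ℕⁿ` with `Σ d = m` and
`n ∣ Σ_{j=1}^{n−1} (n−j)·dⱼ`. -/
theorem leafed_cycle_generating_function (n : ℕ) (hn : 3 ≤ n) (m : ℕ) :
    {lam : Fin n → ℤ |
        (∀ i, 0 ≤ (leafedCycleLaplacianMinor n).mulVec lam i) ∧
        lam ⟨0, by omega⟩ = (m : ℤ)}.ncard =
      {d : Fin n → ℕ | (∑ j, d j = m) ∧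
        n ∣ ∑ j ∈ Finset.univ.filter (fun j : Fin n => 0 < j.val),
          (n - j.val) * d j}.ncard := by
  classical
  set f : (Fin n → ℤ) → (Fin n → ℕ) :=
    fun lam i => ((leafedCycleLaplacianMinor n).mulVec lam i).toNat with hf
  set S : Set (Fin n → ℤ) := {lam : Fin n → ℤ |
      (∀ i, 0 ≤ (leafedCycleLaplacianMinor n).mulVec lam i) ∧
      lam ⟨0, by omega⟩ = (m : ℤ)} with hS
  set T : Set (Fin n → ℕ) := {d : Fin n → ℕ | (∑ j, d j = m) ∧
      n ∣ ∑ j ∈ Finset.univ.filter (fun j : Fin n => 0 < j.val),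
        (n - j.val) * d j} with hT
  have hinj : Set.InjOn f S := by
    rintro lam ⟨hpos, h0⟩ lam' ⟨hpos', h0'⟩ heq
    apply LeafedAux.inj_lemma hn
    · intro i
      have h1 := congrFun heq i
      simp only [hf] at h1
      rw [← Int.toNat_of_nonneg (hpos i), ← Int.toNat_of_nonneg (hpos' i), h1]
    · rw [h0, h0']
  have himg : f '' S = T := by
    ext d
    constructor
    · rintro ⟨lam, ⟨hpos, h0⟩, rfl⟩
      constructor
      · have hZ : ((∑ j, f lam j : ℕ) : ℤ) = (m : ℤ) := by
          push_cast
          rw [Finset.sum_congr rfl (fun j (_ : j ∈ Finset.univ) =>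
            Int.toNat_of_nonneg (hpos j))]
          rw [LeafedAux.sum_rows hn lam, h0]
        exact_mod_cast hZ
      · have hsplit : Finset.univ.filter (fun j : Fin n => ¬ 0 < j.val)
            = {(⟨0, by omega⟩ : Fin n)} := by
          ext a
          simp only [Finset.mem_filter, Finset.mem_univ, true_and, Finset.mem_singleton,
            Fin.ext_iff]
          omega
        have hZ : ((∑ j ∈ Finset.univ.filter (fun j : Fin n => 0 < j.val),
              (n - j.val) * f lam j : ℕ) : ℤ)
            = ∑ j ∈ Finset.univ.filter (fun j : Fin n => 0 < j.val),
              ((n:ℤ) - j.val) * (leafedCycleLaplacianMinor n).mulVec lam j := by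
          push_cast
          refine Finset.sum_congr rfl fun j _ => ?_
          rw [Int.toNat_of_nonneg (hpos j), Nat.cast_sub (le_of_lt j.isLt)]
        have hsum2 := Finset.sum_filter_add_sum_filter_not Finset.univ
          (fun j : Fin n => 0 < j.val)
          (fun j => ((n:ℤ) - j.val) * (leafedCycleLaplacianMinor n).mulVec lam j)
        rw [hsplit, Finset.sum_singleton] at hsum2
        have hw := LeafedAux.weighted hn lam
        rw [hw] at hsum2
        simp only [Fin.val_mk, Nat.cast_zero, sub_zero] at hsum2
        have hdvdZ : (n:ℤ) ∣ ∑ j ∈ Finset.univ.filter (fun j : Fin n => 0 < j.val),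
            ((n:ℤ) - j.val) * (leafedCycleLaplacianMinor n).mulVec lam j := by
          refine ⟨2 * lam ⟨0, by omega⟩ - lam ⟨n-1, by omega⟩
            - (leafedCycleLaplacianMinor n).mulVec lam ⟨0, by omega⟩, ?_⟩
          linarith [hsum2]
        have : (n:ℤ) ∣ ((∑ j ∈ Finset.univ.filter (fun j : Fin n => 0 < j.val),
            (n - j.val) * f lam j : ℕ) : ℤ) := by
          rw [hZ]; exact hdvdZ
        exact_mod_cast this
    · rintro ⟨hsum, hdvd⟩
      have hdvdZ : (n:ℤ) ∣ LeafedAux.Sv n d := by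
        rw [← LeafedAux.convS hn d]
        exact_mod_cast hdvd
      have hm' : (m:ℤ) = LeafedAux.Df n d 0 + ∑ j ∈ Finset.Ico 1 n, LeafedAux.Df n d j := by
        have h1 : ((m:ℕ):ℤ) = ∑ j ∈ Finset.range n, LeafedAux.Df n d j := by
          rw [← hsum]; exact LeafedAux.convM d
        rw [h1, Finset.range_eq_Ico, Finset.sum_eq_sum_Ico_succ_bot (show 0 < n by omega)]
      have hg := LeafedAux.gRow hn m d hdvdZ hm'
      refine ⟨LeafedAux.gf n m d, ⟨fun i => ?_, ?_⟩, ?_⟩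
      · rw [hg i]; exact LeafedAux.Df_nonneg d i.val
      · show LeafedAux.gf n m d ⟨0, by omega⟩ = (m:ℤ)
        simp [LeafedAux.gf, LeafedAux.Ff_zero]
      · funext i
        show ((leafedCycleLaplacianMinor n).mulVec (LeafedAux.gf n m d) i).toNat = d i
        rw [hg i]
        simp [LeafedAux.Df, i.isLt]
  rw [← himg, Set.ncard_image_of_injOn hinj]
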